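/- Constancy of F on the cluster set (Proposition 4.1(ii)). Under the hypotheses of the global subsequential convergence setting, suppose additionally that (f, φ) is L-smooth adaptable restricted on a set X containing dom P₁ ∩ Q, and that ζ := lim_{k→∞} F(x^k) exists, where F := ι_Q + P₁ − P₂ + f. Then for every cluster point x* of {x^k}, one has F(x*) = ζ; that is, F is constant, equal to ζ, on the set of all cluster points of {x^k}. -/

import Mathlib

open Filter Topology Bornology RealInnerProductSpace
open scoped Classical

noncomputable section

/-- `ℝⁿ` with the Euclidean inner product. -/
abbrev E (n : ℕ) := EuclideanSpace ℝ (Fin n)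

/-- Bregman distance `D_φ(x, y) = φ(x) − φ(y) − ⟨∇φ(y), x − y⟩` associated with the
kernel `φ` whose gradient is `φ'`. -/
def breg {n : ℕ} (φ : E n → ℝ) (φ' : E n → E n) (x y : E n) : ℝ :=
  φ x - φ y - ⟪φ' y, x - y⟫

/-- `ε`-subdifferential at `x` of the extended-real-valued convex function that is equal
to `h` on its domain `S` and `+∞` outside `S`:
`∂_ε h(x) = {d : h(y) ≥ h(x) + ⟨d, y − x⟩ − ε for all y}` (the inequality being automatic
for `y ∉ S`). -/
def epsSubdiff {n : ℕ} (S : Set (E n)) (h : E n → ℝ) (ε : ℝ) (x : E n) : Set (E n) :=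
  {d | ∀ y ∈ S, h x + ⟪d, y - x⟫ - ε ≤ h y}

/-- **Proposition 4.1(ii).** Constancy of `F = ι_Q + P₁ − P₂ + f` on the set of cluster
points of the iBPDCA iterates. -/
theorem F_constant_on_cluster_set
    {n : ℕ} (Q Nf U S X' : Set (E n)) (P₁ P₂ f φ : E n → ℝ)
    (f' φ' : E n → E n) (μ γmin γmax L : ℝ)
    (x : ℕ → E n) (γ δ : ℕ → ℝ) (ξ d Δ : ℕ → E n)
    -- `Q` closed convex; `P₁` proper lsc convex (domain `S`); `P₂` convex continuous
    (hQclosed : IsClosed Q) (hQconv : Convex ℝ Q)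
    (hSne : S.Nonempty) (hP₁conv : ConvexOn ℝ S P₁)
    (hP₁lsc : LowerSemicontinuous (fun y => if y ∈ S then (P₁ y : EReal) else (⊤ : EReal)))
    (hP₂conv : ConvexOn ℝ Set.univ P₂) (hP₂cont : Continuous P₂)
    -- `f` continuously differentiable on an open set `Nf ⊇ dom P₁ ∩ Q`
    (hNfopen : IsOpen Nf) (hNfsub : S ∩ Q ⊆ Nf)
    (hfdiff : ∀ u ∈ Nf, HasGradientAt f (f' u) u)
    (hf'cont : ContinuousOn f' Nf)
    -- `φ` differentiable on the open convex set `U`, `dom P₁ ∩ Q ⊆ U ⊆ interior Q`,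
    -- `φ` μ-strongly convex on `U`, `∇φ` Lipschitz on bounded subsets of `U`
    (hUopen : IsOpen U) (hUconv : Convex ℝ U)
    (hSQU : S ∩ Q ⊆ U) (hUintQ : U ⊆ interior Q)
    (hφdiff : ∀ u ∈ U, HasGradientAt φ (φ' u) u)
    (hμ : 0 < μ)
    (hφsconv : ∀ u ∈ U, ∀ v ∈ U, μ / 2 * ‖v - u‖ ^ 2 ≤ breg φ φ' v u)
    (hφ'lip : ∀ B : Set (E n), B ⊆ U → IsBounded B →
        ∃ Kl : NNReal, LipschitzOnWith Kl φ' B)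
    -- `(f, φ)` is `L`-smooth adaptable restricted on `X' ⊇ dom P₁ ∩ Q`
    (hL : 0 ≤ L) (hSQX : S ∩ Q ⊆ X')
    (hsmad : ∀ u ∈ X', ∀ v ∈ X', |f v - f u - ⟪f' u, v - u⟫| ≤ L * breg φ φ' v u)
    -- the bounded sequence of iterates and the inexact optimality condition
    (hxbdd : IsBounded (Set.range x))
    (hxmem : ∀ k, x k ∈ S ∩ interior Q)
    (hγmin : 0 < γmin) (hγ : ∀ k, γmin ≤ γ k ∧ γ k ≤ γmax)
    (hδpos : ∀ k, 0 ≤ δ k)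
    (hξ : ∀ k, ξ k ∈ epsSubdiff Set.univ P₂ 0 (x k))
    (hd : ∀ k, d (k + 1) ∈ epsSubdiff S P₁ (δ k) (x (k + 1)))
    (hΔ : ∀ k, Δ k = d (k + 1) + f' (x k) - ξ k + γ k • (φ' (x (k + 1)) - φ' (x k)))
    -- vanishing quantities
    (hbreg0 : Tendsto (fun k => breg φ φ' (x (k + 1)) (x k)) atTop (𝓝 0))
    (hΔ0 : Tendsto (fun k => ‖Δ k‖) atTop (𝓝 0))
    (hδ0 : Tendsto δ atTop (𝓝 0))
    -- `ζ` is the limit of `F(x^k)`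
    (ζ : ℝ) (hζ : Tendsto (fun k => P₁ (x k) - P₂ (x k) + f (x k)) atTop (𝓝 ζ)) :
    ∀ xs : E n,
      (∃ ψ : ℕ → ℕ, StrictMono ψ ∧ Tendsto (fun i => x (ψ i)) atTop (𝓝 xs)) →
      xs ∈ S ∧ xs ∈ Q ∧ P₁ xs - P₂ xs + f xs = ζ := by
    -- memberships
  have hxS : ∀ k, x k ∈ S := fun k => (hxmem k).1
  have hxQ : ∀ k, x k ∈ Q := fun k => interior_subset (hxmem k).2
  have hxSQ : ∀ k, x k ∈ S ∩ Q := fun k => ⟨hxS k, hxQ k⟩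
  have hxU : ∀ k, x k ∈ U := fun k => hSQU (hxSQ k)
  have hxX : ∀ k, x k ∈ X' := fun k => hSQX (hxSQ k)
  -- bound on the iterates
  obtain ⟨Mx, hMx⟩ := isBounded_iff_forall_norm_le.mp hxbdd
  have hMx' : ∀ k, ‖x k‖ ≤ Mx := fun k => hMx _ ⟨k, rfl⟩
  have hMx0 : 0 ≤ Mx := le_trans (norm_nonneg _) (hMx' 0)
  have hdiff2Mx : ∀ j k, ‖x j - x k‖ ≤ 2 * Mx := fun j k =>
    (norm_sub_le _ _).trans (by linarith [hMx' j, hMx' k])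
  have hipb : ∀ (a : E n) (j k : ℕ), |⟪a, x j - x k⟫| ≤ ‖a‖ * (2 * Mx) := fun a j k =>
    (abs_real_inner_le_norm a _).trans
      (mul_le_mul_of_nonneg_left (hdiff2Mx j k) (norm_nonneg a))
  -- Lipschitz constant of φ' on the range of x
  obtain ⟨K, hK⟩ := hφ'lip (Set.range x)
    (by rintro y ⟨k, rfl⟩; exact hxU k) hxbdd
  set Kr : ℝ := (K : ℝ) with hKr
  have hKr0 : 0 ≤ Kr := K.coe_nonneg
  have hKd : ∀ j k, ‖φ' (x j) - φ' (x k)‖ ≤ Kr * ‖x j - x k‖ := by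
    intro j k
    have h := hK.dist_le_mul (x j) ⟨j, rfl⟩ (x k) ⟨k, rfl⟩
    rwa [dist_eq_norm, dist_eq_norm] at h
  -- bound on φ' along the iterates
  set Mg : ℝ := ‖φ' (x 0)‖ + Kr * (2 * Mx) with hMgdef
  have hMg : ∀ k, ‖φ' (x k)‖ ≤ Mg := by
    intro k
    have h1 := hKd k 0
    have h2 : Kr * ‖x k - x 0‖ ≤ Kr * (2 * Mx) :=
      mul_le_mul_of_nonneg_left (hdiff2Mx k 0) hKr0
    have h3 := norm_sub_norm_le (φ' (x k)) (φ' (x 0))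
    linarith
  have hMg0 : 0 ≤ Mg := le_trans (norm_nonneg _) (hMg 0)
  -- breg is nonnegative on U
  have hbregnn : ∀ u ∈ U, ∀ v ∈ U, 0 ≤ breg φ φ' v u := fun u hu v hv =>
    le_trans (by positivity) (hφsconv u hu v hv)
  -- upper bound on φ along the iterates
  have hφub : ∀ k, φ (x k) ≤ φ (x 0) + Mg * (2 * Mx) := by
    intro k
    have h0 := hbregnn (x k) (hxU k) (x 0) (hxU 0)
    have hip := hipb (φ' (x k)) 0 k
    have hip2 : Kr * 0 = 0 := by ring
    rw [abs_le] at hip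
    have h4 : ‖φ' (x k)‖ * (2 * Mx) ≤ Mg * (2 * Mx) :=
      mul_le_mul_of_nonneg_right (hMg k) (by linarith)
    unfold breg at h0
    linarith
  -- upper bound on the Bregman distance to x 0
  set Bd : ℝ := Mg * (2 * Mx) + ‖φ' (x 0)‖ * (2 * Mx) with hBddef
  have hBd : ∀ k, breg φ φ' (x k) (x 0) ≤ Bd := by
    intro k
    have h1 := hφub k
    have h2 := (abs_le.mp (hipb (φ' (x 0)) k 0)).1
    unfold breg
    linarith
  -- lower bound on f along the iterates
  set mf : ℝ := f (x 0) - ‖f' (x 0)‖ * (2 * Mx) - L * Bd with hmfdef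
  have hflb : ∀ k, mf ≤ f (x k) := by
    intro k
    have h := abs_le.mp (hsmad (x 0) (hxX 0) (x k) (hxX k))
    have h2 : L * breg φ φ' (x k) (x 0) ≤ L * Bd :=
      mul_le_mul_of_nonneg_left (hBd k) hL
    have h3 := (abs_le.mp (hipb (f' (x 0)) k 0)).1
    linarith [h.1, h.2]
  -- bound on P₂ on a ball containing the iterates
  obtain ⟨C₂, hC₂⟩ := (isCompact_closedBall (0 : E n) (Mx + 1)).exists_bound_of_continuousOn
    hP₂cont.continuousOn
  have hxball : ∀ k, x k ∈ Metric.closedBall (0 : E n) (Mx + 1) := fun k =>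
    mem_closedBall_zero_iff.mpr (by linarith [hMx' k])
  have hC₂0 : 0 ≤ C₂ := le_trans (norm_nonneg _) (hC₂ _ (hxball 0))
  have hP₂b : ∀ k, |P₂ (x k)| ≤ C₂ := fun k => hC₂ _ (hxball k)
  -- bound on ξ
  have hξb : ∀ k, ‖ξ k‖ ≤ 2 * C₂ := by
    intro k
    by_cases h : ξ k = 0
    · rw [h, norm_zero]; linarith
    · have hn : ‖ξ k‖ ≠ 0 := norm_ne_zero_iff.mpr h
      set y : E n := x k + ‖ξ k‖⁻¹ • ξ k with hy
      have hun : ‖(‖ξ k‖⁻¹ • ξ k)‖ = 1 := by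
        rw [norm_smul, norm_inv, norm_norm, inv_mul_cancel₀ hn]
      have hyn : ‖y‖ ≤ Mx + 1 := by
        calc ‖y‖ ≤ ‖x k‖ + ‖(‖ξ k‖⁻¹ • ξ k)‖ := norm_add_le _ _
        _ ≤ Mx + 1 := by rw [hun]; linarith [hMx' k]
      have hsb := hξ k y (Set.mem_univ y)
      have hin : ⟪ξ k, y - x k⟫ = ‖ξ k‖ := by
        rw [hy, add_sub_cancel_left, real_inner_smul_right, real_inner_self_eq_norm_sq, sq]
        field_simp
      have hyb := abs_le.mp (hC₂ y (mem_closedBall_zero_iff.mpr hyn))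
      have hxkb := abs_le.mp (hP₂b k)
      rw [hin] at hsb
      have : (P₂ y : ℝ) ≤ C₂ := by
        simpa [Real.norm_eq_abs] using hyb.2
      linarith [hxkb.1]
  -- step lengths tend to 0
  have hstep2 : Tendsto (fun k => ‖x (k + 1) - x k‖ ^ 2) atTop (𝓝 0) := by
    have h1 : ∀ k, 0 ≤ ‖x (k + 1) - x k‖ ^ 2 := fun k => sq_nonneg _
    have h2 : ∀ k, ‖x (k + 1) - x k‖ ^ 2 ≤ (2 / μ) * breg φ φ' (x (k + 1)) (x k) := by
      intro k
      have h := hφsconv (x k) (hxU k) (x (k + 1)) (hxU (k + 1))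
      rw [div_mul_eq_mul_div, le_div_iff₀ hμ]
      nlinarith
    have h3 : Tendsto (fun k => (2 / μ) * breg φ φ' (x (k + 1)) (x k)) atTop (𝓝 0) := by
      simpa using hbreg0.const_mul (2 / μ)
    exact tendsto_of_tendsto_of_tendsto_of_le_of_le tendsto_const_nhds h3 h1 h2
  have hstep : Tendsto (fun k => ‖x (k + 1) - x k‖) atTop (𝓝 0) := by
    have h := (Real.continuous_sqrt.tendsto 0).comp hstep2
    rw [Real.sqrt_zero] at h
    exact h.congr fun k => Real.sqrt_sq (norm_nonneg _)
  -- eventual upper bound on P₁ along the iterates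
  set CP : ℝ := ζ + 1 + C₂ - mf with hCPdef
  have hP₁ub : ∀ᶠ k in atTop, P₁ (x k) ≤ CP := by
    have h1 : ∀ᶠ k in atTop, P₁ (x k) - P₂ (x k) + f (x k) < ζ + 1 :=
      hζ.eventually_lt_const (by linarith)
    filter_upwards [h1] with k hk
    have h2 := hflb k
    have h3 := (abs_le.mp (hP₂b k)).2
    linarith
  -- main part
  rintro xs ⟨ψ, hψ, hconv⟩
  have hψtop : Tendsto ψ atTop atTop := hψ.tendsto_atTop
  have hxsQ : xs ∈ Q :=
    hQclosed.mem_of_tendsto hconv (Eventually.of_forall fun i => hxQ (ψ i))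
  set g : E n → EReal := fun y => if y ∈ S then (P₁ y : EReal) else (⊤ : EReal) with hgdef
  have hgx : ∀ k, g (x k) = (P₁ (x k) : EReal) := fun k => if_pos (hxS k)
  have hP₁ubψ : ∀ᶠ i in atTop, P₁ (x (ψ i)) ≤ CP := hψtop.eventually hP₁ub
  have hxsS : xs ∈ S := by
    by_contra hns
    have hgxs : g xs = ⊤ := if_neg hns
    have hlsc := hP₁lsc xs (CP : EReal) (by show (CP : EReal) < g xs; rw [hgxs]; exact EReal.coe_lt_top CP)
    have h2 := hconv.eventually hlsc
    obtain ⟨i, h3, h4⟩ := (h2.and hP₁ubψ).exists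
    rw [hgx (ψ i)] at h3
    exact absurd (EReal.coe_lt_coe_iff.mp h3) (not_lt.mpr h4)
  have hxsNf : xs ∈ Nf := hNfsub ⟨hxsS, hxsQ⟩
  have hfcont : ContinuousAt f xs := (hfdiff xs hxsNf).continuousAt
  have hf'at : ContinuousAt f' xs := hf'cont.continuousAt (hNfopen.mem_nhds hxsNf)
  have hψ1 : ∀ᶠ i in atTop, 1 ≤ ψ i := hψtop.eventually_ge_atTop 1
  have hsub1 : Tendsto (fun i => ψ i - 1) atTop atTop := by
    apply tendsto_atTop_atTop.mpr
    intro b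
    refine ⟨b + 1, fun a ha => ?_⟩
    have := hψ.le_apply (x := a)
    omega
  have hdiffψ : Tendsto (fun i => x (ψ i) - x (ψ i - 1)) atTop (𝓝 0) := by
    rw [tendsto_zero_iff_norm_tendsto_zero]
    have h := hstep.comp hsub1
    refine h.congr' ?_
    filter_upwards [hψ1] with i hi
    have he : ψ i - 1 + 1 = ψ i := Nat.sub_add_cancel hi
    simp only [Function.comp_apply, he]
  have hprev : Tendsto (fun i => x (ψ i - 1)) atTop (𝓝 xs) := by
    have h := hconv.sub hdiffψ
    simpa using h
  have hf'prev : Tendsto (fun i => f' (x (ψ i - 1))) atTop (𝓝 (f' xs)) :=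
    hf'at.tendsto.comp hprev
  set M : ℝ := 1 + (‖f' xs‖ + 1) + 2 * C₂ + γmax * (Kr * (2 * Mx)) with hMdef
  have hγmax0 : 0 < γmax := lt_of_lt_of_le hγmin (le_trans (hγ 0).1 (hγ 0).2)
  have hdbd : ∀ᶠ i in atTop, ‖d (ψ i)‖ ≤ M := by
    have hΔsmall : ∀ᶠ i in atTop, ‖Δ (ψ i - 1)‖ ≤ 1 := by
      filter_upwards [(hΔ0.comp hsub1).eventually_lt_const zero_lt_one] with i hi
      exact le_of_lt hi
    have hf'small : ∀ᶠ i in atTop, ‖f' (x (ψ i - 1))‖ < ‖f' xs‖ + 1 :=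
      hf'prev.norm.eventually_lt_const (lt_add_one _)
    filter_upwards [hψ1, hΔsmall, hf'small] with i h1 h2 h3
    have hk1 : ψ i - 1 + 1 = ψ i := Nat.sub_add_cancel h1
    set k := ψ i - 1 with hkdef
    have hval : d (ψ i) = Δ k - f' (x k) + ξ k - γ k • (φ' (x (ψ i)) - φ' (x k)) := by
      have h := hΔ k
      rw [hk1] at h
      rw [h]; abel
    have hγk : |γ k| ≤ γmax := by
      rw [abs_of_pos (lt_of_lt_of_le hγmin (hγ k).1)]; exact (hγ k).2
    have hw : ‖φ' (x (ψ i)) - φ' (x k)‖ ≤ Kr * (2 * Mx) :=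
      (hKd (ψ i) k).trans (mul_le_mul_of_nonneg_left (hdiff2Mx (ψ i) k) hKr0)
    have hsm : ‖γ k • (φ' (x (ψ i)) - φ' (x k))‖ ≤ γmax * (Kr * (2 * Mx)) := by
      rw [norm_smul, Real.norm_eq_abs]
      exact mul_le_mul hγk hw (norm_nonneg _) (le_of_lt hγmax0)
    calc ‖d (ψ i)‖ = ‖Δ k - f' (x k) + ξ k - γ k • (φ' (x (ψ i)) - φ' (x k))‖ := by
          rw [hval]
      _ ≤ ‖Δ k - f' (x k) + ξ k‖ + ‖γ k • (φ' (x (ψ i)) - φ' (x k))‖ := norm_sub_le _ _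
      _ ≤ (‖Δ k - f' (x k)‖ + ‖ξ k‖) + ‖γ k • (φ' (x (ψ i)) - φ' (x k))‖ := by
          have := norm_add_le (Δ k - f' (x k)) (ξ k); linarith
      _ ≤ ((‖Δ k‖ + ‖f' (x k)‖) + ‖ξ k‖) + ‖γ k • (φ' (x (ψ i)) - φ' (x k))‖ := by
          have := norm_sub_le (Δ k) (f' (x k)); linarith
      _ ≤ M := by
          rw [hMdef]
          have := hξb k
          linarith
  have hinner0 : Tendsto (fun i => ⟪d (ψ i), x (ψ i) - xs⟫) atTop (𝓝 0) := by
    apply squeeze_zero_norm' (a := fun i => M * ‖x (ψ i) - xs‖)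
    · filter_upwards [hdbd] with i hi
      calc ‖(⟪d (ψ i), x (ψ i) - xs⟫ : ℝ)‖ ≤ ‖d (ψ i)‖ * ‖x (ψ i) - xs‖ :=
            norm_inner_le_norm _ _
        _ ≤ M * ‖x (ψ i) - xs‖ := mul_le_mul_of_nonneg_right hi (norm_nonneg _)
    · have h : Tendsto (fun i => ‖x (ψ i) - xs‖) atTop (𝓝 0) := by
        rw [← tendsto_zero_iff_norm_tendsto_zero]
        simpa using hconv.sub (tendsto_const_nhds (x := xs))
      simpa using h.const_mul M
  have hδψ : Tendsto (fun i => δ (ψ i - 1)) atTop (𝓝 0) := hδ0.comp hsub1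
  set u : ℕ → ℝ := fun i => ⟪d (ψ i), x (ψ i) - xs⟫ + δ (ψ i - 1) with hudef
  have hu0 : Tendsto u atTop (𝓝 0) := by
    rw [hudef]; simpa using hinner0.add hδψ
  have hub : ∀ᶠ i in atTop, P₁ (x (ψ i)) ≤ P₁ xs + u i := by
    filter_upwards [hψ1] with i h1
    have hk1 : ψ i - 1 + 1 = ψ i := Nat.sub_add_cancel h1
    have h := hd (ψ i - 1) xs hxsS
    rw [hk1] at h
    have hswap : (⟪d (ψ i), xs - x (ψ i)⟫ : ℝ) = -⟪d (ψ i), x (ψ i) - xs⟫ := by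
      rw [← inner_neg_right, neg_sub]
    rw [hswap] at h
    have hue : u i = ⟪d (ψ i), x (ψ i) - xs⟫ + δ (ψ i - 1) := by rw [hudef]
    rw [hue]
    linarith
  have hP₁lim : Tendsto (fun i => P₁ (x (ψ i))) atTop (𝓝 (P₁ xs)) := by
    rw [tendsto_order]
    constructor
    · intro c hc
      have hgxs : g xs = (P₁ xs : EReal) := if_pos hxsS
      have hlt : (c : EReal) < g xs := by rw [hgxs]; exact_mod_cast hc
      have h := hconv.eventually (hP₁lsc xs (c : EReal) hlt)
      filter_upwards [h] with i hi
      rw [hgx (ψ i)] at hi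
      exact_mod_cast hi
    · intro c hc
      have h2 : Tendsto (fun i => P₁ xs + u i) atTop (𝓝 (P₁ xs)) := by
        simpa using tendsto_const_nhds.add hu0
      filter_upwards [hub, h2.eventually_lt_const hc] with i hi1 hi2
      linarith
  refine ⟨hxsS, hxsQ, ?_⟩
  have hF1 : Tendsto (fun i => P₁ (x (ψ i)) - P₂ (x (ψ i)) + f (x (ψ i))) atTop
      (𝓝 (P₁ xs - P₂ xs + f xs)) :=
    (hP₁lim.sub ((hP₂cont.tendsto xs).comp hconv)).add (hfcont.tendsto.comp hconv)
  have hF2 : Tendsto (fun i => P₁ (x (ψ i)) - P₂ (x (ψ i)) + f (x (ψ i))) atTop (𝓝 ζ) :=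
    hζ.comp hψtop
  exact tendsto_nhds_unique hF1 hF2
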